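/- arXiv:0904.0651 — 3 statements merged into one kernel-verified Lean document; each statement's English description precedes it below -/
import Mathlib

section
/- Let k be a field. The quotient algebras kQ/⟨α₁β₁, α₂β₂⟩ and kQ/⟨α₁β₁ − α₂β₁ − α₁β₂, α₂β₂⟩ are isomorphic as k-algebras. -/
/-!
Context: `F = FreeAlgebra k (Fin 7)` is the free `k`-algebra on seven generators
`e₁, e₂, e₃, α₁, α₂, β₁, β₂`.  `J` is the two-sided ideal generated by
`eᵢeⱼ (i ≠ j)`, `eᵢ² - eᵢ`, `e₁ + e₂ + e₃ - 1`, `αᵢ - e₁ αᵢ e₂`, `βᵢ - e₂ βᵢ e₃`,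
and `kQ = F/J` is the path algebra of the quiver
`3 ⇉(β₁,β₂) 2 ⇉(α₁,α₂) 1`.
-/

noncomputable section

variable (k : Type*) [Field k]

/-- The generators of the free algebra `F`: `e₁, e₂, e₃, α₁, α₂, β₁, β₂`. -/
def e1 : FreeAlgebra k (Fin 7) := FreeAlgebra.ι k 0
def e2 : FreeAlgebra k (Fin 7) := FreeAlgebra.ι k 1
def e3 : FreeAlgebra k (Fin 7) := FreeAlgebra.ι k 2
def a1 : FreeAlgebra k (Fin 7) := FreeAlgebra.ι k 3
def a2 : FreeAlgebra k (Fin 7) := FreeAlgebra.ι k 4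
def b1 : FreeAlgebra k (Fin 7) := FreeAlgebra.ι k 5
def b2 : FreeAlgebra k (Fin 7) := FreeAlgebra.ι k 6

/-- The defining relations of the path algebra `kQ`. -/
def rels : Set (FreeAlgebra k (Fin 7)) :=
  {e1 k * e2 k, e2 k * e1 k, e1 k * e3 k, e3 k * e1 k, e2 k * e3 k, e3 k * e2 k,
   e1 k * e1 k - e1 k, e2 k * e2 k - e2 k, e3 k * e3 k - e3 k,
   e1 k + e2 k + e3 k - 1,
   a1 k - e1 k * a1 k * e2 k, a2 k - e1 k * a2 k * e2 k,
   b1 k - e2 k * b1 k * e3 k, b2 k - e2 k * b2 k * e3 k}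

/-- The two-sided ideal `J ⊆ F` of relations. -/
def J : TwoSidedIdeal (FreeAlgebra k (Fin 7)) := TwoSidedIdeal.span (rels k)

/-- The path algebra `kQ := F/J`. -/
abbrev kQ := (J k).ringCon.Quotient

/-- The images `e₁, e₂, e₃, α₁, α₂, β₁, β₂` of the generators in `kQ`. -/
def E1 : kQ k := (J k).ringCon.mk' (e1 k)
def E2 : kQ k := (J k).ringCon.mk' (e2 k)
def E3 : kQ k := (J k).ringCon.mk' (e3 k)
def A1 : kQ k := (J k).ringCon.mk' (a1 k)
def A2 : kQ k := (J k).ringCon.mk' (a2 k)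
def B1 : kQ k := (J k).ringCon.mk' (b1 k)
def B2 : kQ k := (J k).ringCon.mk' (b2 k)

/-! ### Auxiliary general machinery -/

section Aux

variable {K A B : Type*} [CommSemiring K] [Ring A] [Ring B] [Algebra K A] [Algebra K B]

/-- The projection onto the quotient by a ring congruence, as an algebra homomorphism. -/
def mkAH (c : RingCon A) : A →ₐ[K] c.Quotient :=
  { c.mk' with commutes' := fun _ => rfl }

@[simp] lemma mkAH_apply (c : RingCon A) (x : A) : (mkAH (K := K) c) x = c.mk' x := rfl

lemma mk'_eq_zero {I : TwoSidedIdeal A} {x : A} (h : x ∈ I) : I.ringCon.mk' x = 0 := by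
  rw [← map_zero I.ringCon.mk']
  exact Quotient.sound' h

lemma span_le' {s : Set A} {I : TwoSidedIdeal A} (h : s ⊆ I) :
    TwoSidedIdeal.span s ≤ I := by
  intro x hx
  exact TwoSidedIdeal.mem_span_iff.1 hx I h

/-- Lift an algebra hom vanishing on a two-sided ideal to the quotient. -/
def liftAH (I : TwoSidedIdeal A) (f : A →ₐ[K] B) (h : I ≤ TwoSidedIdeal.ker f) :
    I.ringCon.Quotient →ₐ[K] B where
  toFun := fun x => Quotient.liftOn' x f fun a b hab =>
    (TwoSidedIdeal.ringCon_le_iff.1 h) hab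
  map_one' := map_one f
  map_mul' := fun x y => Quotient.inductionOn₂' x y fun a b => map_mul f a b
  map_zero' := map_zero f
  map_add' := fun x y => Quotient.inductionOn₂' x y fun a b => map_add f a b
  commutes' := fun r => f.commutes r

@[simp] lemma liftAH_mk (I : TwoSidedIdeal A) (f : A →ₐ[K] B)
    (h : I ≤ TwoSidedIdeal.ker f) (x : A) :
    liftAH I f h (I.ringCon.mk' x) = f x := rfl

end Aux

/-! ### The twisting automorphism data -/

/-- Endomorphism of `F`: `α₁ ↦ α₁ - α₂`, `β₁ ↦ β₁ - β₂`, fixing other generators. -/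
def phiF : FreeAlgebra k (Fin 7) →ₐ[k] FreeAlgebra k (Fin 7) :=
  FreeAlgebra.lift k ![e1 k, e2 k, e3 k, a1 k - a2 k, a2 k, b1 k - b2 k, b2 k]

/-- Endomorphism of `F`: `α₁ ↦ α₁ + α₂`, `β₁ ↦ β₁ + β₂`, fixing other generators. -/
def psiF : FreeAlgebra k (Fin 7) →ₐ[k] FreeAlgebra k (Fin 7) :=
  FreeAlgebra.lift k ![e1 k, e2 k, e3 k, a1 k + a2 k, a2 k, b1 k + b2 k, b2 k]

lemma e1_def : FreeAlgebra.ι k (0 : Fin 7) = e1 k := rfl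
lemma e2_def : FreeAlgebra.ι k (1 : Fin 7) = e2 k := rfl
lemma e3_def : FreeAlgebra.ι k (2 : Fin 7) = e3 k := rfl
lemma a1_def : FreeAlgebra.ι k (3 : Fin 7) = a1 k := rfl
lemma a2_def : FreeAlgebra.ι k (4 : Fin 7) = a2 k := rfl
lemma b1_def : FreeAlgebra.ι k (5 : Fin 7) = b1 k := rfl
lemma b2_def : FreeAlgebra.ι k (6 : Fin 7) = b2 k := rfl

@[simp] lemma phiF_e1 : phiF k (e1 k) = e1 k := by
  rw [phiF, e1, FreeAlgebra.lift_ι_apply]; rfl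
@[simp] lemma phiF_e2 : phiF k (e2 k) = e2 k := by
  rw [phiF, e2, FreeAlgebra.lift_ι_apply]; rfl
@[simp] lemma phiF_e3 : phiF k (e3 k) = e3 k := by
  rw [phiF, e3, FreeAlgebra.lift_ι_apply]; rfl
@[simp] lemma phiF_a1 : phiF k (a1 k) = a1 k - a2 k := by
  rw [phiF, a1, FreeAlgebra.lift_ι_apply]; rfl
@[simp] lemma phiF_a2 : phiF k (a2 k) = a2 k := by
  rw [phiF, a2, FreeAlgebra.lift_ι_apply]; rfl
@[simp] lemma phiF_b1 : phiF k (b1 k) = b1 k - b2 k := by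
  rw [phiF, b1, FreeAlgebra.lift_ι_apply]; rfl
@[simp] lemma phiF_b2 : phiF k (b2 k) = b2 k := by
  rw [phiF, b2, FreeAlgebra.lift_ι_apply]; rfl

@[simp] lemma psiF_e1 : psiF k (e1 k) = e1 k := by
  rw [psiF, e1, FreeAlgebra.lift_ι_apply]; rfl
@[simp] lemma psiF_e2 : psiF k (e2 k) = e2 k := by
  rw [psiF, e2, FreeAlgebra.lift_ι_apply]; rfl
@[simp] lemma psiF_e3 : psiF k (e3 k) = e3 k := by
  rw [psiF, e3, FreeAlgebra.lift_ι_apply]; rfl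
@[simp] lemma psiF_a1 : psiF k (a1 k) = a1 k + a2 k := by
  rw [psiF, a1, FreeAlgebra.lift_ι_apply]; rfl
@[simp] lemma psiF_a2 : psiF k (a2 k) = a2 k := by
  rw [psiF, a2, FreeAlgebra.lift_ι_apply]; rfl
@[simp] lemma psiF_b1 : psiF k (b1 k) = b1 k + b2 k := by
  rw [psiF, b1, FreeAlgebra.lift_ι_apply]; rfl
@[simp] lemma psiF_b2 : psiF k (b2 k) = b2 k := by
  rw [psiF, b2, FreeAlgebra.lift_ι_apply]; rfl

set_option maxHeartbeats 1000000 in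
lemma phiF_comp_psiF : (phiF k).comp (psiF k) = AlgHom.id k _ := by
  apply FreeAlgebra.hom_ext
  funext i
  fin_cases i <;>
    simp [e1_def, e2_def, e3_def, a1_def, a2_def, b1_def, b2_def]

set_option maxHeartbeats 1000000 in
lemma psiF_comp_phiF : (psiF k).comp (phiF k) = AlgHom.id k _ := by
  apply FreeAlgebra.hom_ext
  funext i
  fin_cases i <;>
    simp [e1_def, e2_def, e3_def, a1_def, a2_def, b1_def, b2_def]

/-- Both endomorphisms preserve the relation ideal `J`. -/
lemma map_rels_mem (f : FreeAlgebra k (Fin 7) →ₐ[k] FreeAlgebra k (Fin 7))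
    (he1 : f (e1 k) = e1 k) (he2 : f (e2 k) = e2 k) (he3 : f (e3 k) = e3 k)
    (c c' : k) (ha1 : f (a1 k) = a1 k + c • a2 k) (ha2 : f (a2 k) = a2 k)
    (hb1 : f (b1 k) = b1 k + c' • b2 k) (hb2 : f (b2 k) = b2 k) :
    ∀ r ∈ rels k, f r ∈ J k := by
  intro r hr
  have m1 : (e1 k * e2 k : FreeAlgebra k (Fin 7)) ∈ J k :=
    TwoSidedIdeal.subset_span (Set.mem_insert _ _)
  have m2 : (e2 k * e1 k : FreeAlgebra k (Fin 7)) ∈ J k :=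
    TwoSidedIdeal.subset_span (Set.mem_insert_of_mem _ (Set.mem_insert _ _))
  have m3 : (e1 k * e3 k : FreeAlgebra k (Fin 7)) ∈ J k :=
    TwoSidedIdeal.subset_span (Set.mem_insert_of_mem _ (Set.mem_insert_of_mem _ (Set.mem_insert _ _)))
  have m4 : (e3 k * e1 k : FreeAlgebra k (Fin 7)) ∈ J k :=
    TwoSidedIdeal.subset_span (Set.mem_insert_of_mem _ (Set.mem_insert_of_mem _ (Set.mem_insert_of_mem _ (Set.mem_insert _ _))))
  have m5 : (e2 k * e3 k : FreeAlgebra k (Fin 7)) ∈ J k :=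
    TwoSidedIdeal.subset_span (Set.mem_insert_of_mem _ (Set.mem_insert_of_mem _ (Set.mem_insert_of_mem _ (Set.mem_insert_of_mem _ (Set.mem_insert _ _)))))
  have m6 : (e3 k * e2 k : FreeAlgebra k (Fin 7)) ∈ J k :=
    TwoSidedIdeal.subset_span (Set.mem_insert_of_mem _ (Set.mem_insert_of_mem _ (Set.mem_insert_of_mem _ (Set.mem_insert_of_mem _ (Set.mem_insert_of_mem _ (Set.mem_insert _ _))))))
  have m7 : (e1 k * e1 k - e1 k : FreeAlgebra k (Fin 7)) ∈ J k :=
    TwoSidedIdeal.subset_span (Set.mem_insert_of_mem _ (Set.mem_insert_of_mem _ (Set.mem_insert_of_mem _ (Set.mem_insert_of_mem _ (Set.mem_insert_of_mem _ (Set.mem_insert_of_mem _ (Set.mem_insert _ _)))))))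
  have m8 : (e2 k * e2 k - e2 k : FreeAlgebra k (Fin 7)) ∈ J k :=
    TwoSidedIdeal.subset_span (Set.mem_insert_of_mem _ (Set.mem_insert_of_mem _ (Set.mem_insert_of_mem _ (Set.mem_insert_of_mem _ (Set.mem_insert_of_mem _ (Set.mem_insert_of_mem _ (Set.mem_insert_of_mem _ (Set.mem_insert _ _))))))))
  have m9 : (e3 k * e3 k - e3 k : FreeAlgebra k (Fin 7)) ∈ J k :=
    TwoSidedIdeal.subset_span (Set.mem_insert_of_mem _ (Set.mem_insert_of_mem _ (Set.mem_insert_of_mem _ (Set.mem_insert_of_mem _ (Set.mem_insert_of_mem _ (Set.mem_insert_of_mem _ (Set.mem_insert_of_mem _ (Set.mem_insert_of_mem _ (Set.mem_insert _ _)))))))))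
  have m10 : (e1 k + e2 k + e3 k - 1 : FreeAlgebra k (Fin 7)) ∈ J k :=
    TwoSidedIdeal.subset_span (Set.mem_insert_of_mem _ (Set.mem_insert_of_mem _ (Set.mem_insert_of_mem _ (Set.mem_insert_of_mem _ (Set.mem_insert_of_mem _ (Set.mem_insert_of_mem _ (Set.mem_insert_of_mem _ (Set.mem_insert_of_mem _ (Set.mem_insert_of_mem _ (Set.mem_insert _ _))))))))))
  have m11 : (a1 k - e1 k * a1 k * e2 k : FreeAlgebra k (Fin 7)) ∈ J k :=
    TwoSidedIdeal.subset_span (Set.mem_insert_of_mem _ (Set.mem_insert_of_mem _ (Set.mem_insert_of_mem _ (Set.mem_insert_of_mem _ (Set.mem_insert_of_mem _ (Set.mem_insert_of_mem _ (Set.mem_insert_of_mem _ (Set.mem_insert_of_mem _ (Set.mem_insert_of_mem _ (Set.mem_insert_of_mem _ (Set.mem_insert _ _)))))))))))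
  have m12 : (a2 k - e1 k * a2 k * e2 k : FreeAlgebra k (Fin 7)) ∈ J k :=
    TwoSidedIdeal.subset_span (Set.mem_insert_of_mem _ (Set.mem_insert_of_mem _ (Set.mem_insert_of_mem _ (Set.mem_insert_of_mem _ (Set.mem_insert_of_mem _ (Set.mem_insert_of_mem _ (Set.mem_insert_of_mem _ (Set.mem_insert_of_mem _ (Set.mem_insert_of_mem _ (Set.mem_insert_of_mem _ (Set.mem_insert_of_mem _ (Set.mem_insert _ _))))))))))))
  have m13 : (b1 k - e2 k * b1 k * e3 k : FreeAlgebra k (Fin 7)) ∈ J k :=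
    TwoSidedIdeal.subset_span (Set.mem_insert_of_mem _ (Set.mem_insert_of_mem _ (Set.mem_insert_of_mem _ (Set.mem_insert_of_mem _ (Set.mem_insert_of_mem _ (Set.mem_insert_of_mem _ (Set.mem_insert_of_mem _ (Set.mem_insert_of_mem _ (Set.mem_insert_of_mem _ (Set.mem_insert_of_mem _ (Set.mem_insert_of_mem _ (Set.mem_insert_of_mem _ (Set.mem_insert _ _)))))))))))))
  have m14 : (b2 k - e2 k * b2 k * e3 k : FreeAlgebra k (Fin 7)) ∈ J k :=
    TwoSidedIdeal.subset_span (Set.mem_insert_of_mem _ (Set.mem_insert_of_mem _ (Set.mem_insert_of_mem _ (Set.mem_insert_of_mem _ (Set.mem_insert_of_mem _ (Set.mem_insert_of_mem _ (Set.mem_insert_of_mem _ (Set.mem_insert_of_mem _ (Set.mem_insert_of_mem _ (Set.mem_insert_of_mem _ (Set.mem_insert_of_mem _ (Set.mem_insert_of_mem _ (Set.mem_insert_of_mem _ (Set.mem_singleton _))))))))))))))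
  simp only [rels, Set.mem_insert_iff, Set.mem_singleton_iff] at hr
  rcases hr with rfl|rfl|rfl|rfl|rfl|rfl|rfl|rfl|rfl|rfl|rfl|rfl|rfl|rfl <;>
    simp only [map_mul, map_sub, map_add, map_one, he1, he2, he3, ha1, ha2, hb1, hb2]
  · exact m1
  · exact m2
  · exact m3
  · exact m4
  · exact m5
  · exact m6
  · exact m7
  · exact m8
  · exact m9
  · exact m10
  · have h : a1 k + c • a2 k - e1 k * (a1 k + c • a2 k) * e2 k
        = (a1 k - e1 k * a1 k * e2 k) + c • (a2 k - e1 k * a2 k * e2 k) := by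
      simp only [smul_sub, mul_smul_comm, smul_mul_assoc]
      noncomm_ring
    rw [h]
    exact TwoSidedIdeal.add_mem _ m11 (by rw [Algebra.smul_def]; exact TwoSidedIdeal.mul_mem_left _ _ _ m12)
  · exact m12
  · have h : b1 k + c' • b2 k - e2 k * (b1 k + c' • b2 k) * e3 k
        = (b1 k - e2 k * b1 k * e3 k) + c' • (b2 k - e2 k * b2 k * e3 k) := by
      simp only [smul_sub, mul_smul_comm, smul_mul_assoc]
      noncomm_ring
    rw [h]
    exact TwoSidedIdeal.add_mem _ m13 (by rw [Algebra.smul_def]; exact TwoSidedIdeal.mul_mem_left _ _ _ m14)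
  · exact m14

/-- `kQ/⟨α₁β₁, α₂β₂⟩` and `kQ/⟨α₁β₁ - α₂β₁ - α₁β₂, α₂β₂⟩` are isomorphic `k`-algebras. -/
theorem kQ_quotient_iso_I3 :
    Nonempty
      ((TwoSidedIdeal.span {A1 k * B1 k, A2 k * B2 k} :
          TwoSidedIdeal (kQ k)).ringCon.Quotient ≃ₐ[k]
        (TwoSidedIdeal.span {A1 k * B1 k - A2 k * B1 k - A1 k * B2 k, A2 k * B2 k} :
          TwoSidedIdeal (kQ k)).ringCon.Quotient) := by
  set I1 : TwoSidedIdeal (kQ k) := TwoSidedIdeal.span {A1 k * B1 k, A2 k * B2 k} with hI1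
  set I2 : TwoSidedIdeal (kQ k) :=
    TwoSidedIdeal.span {A1 k * B1 k - A2 k * B1 k - A1 k * B2 k, A2 k * B2 k} with hI2
  -- the composite maps F → kQ → kQ/Iᵢ
  let p1 : kQ k →ₐ[k] I1.ringCon.Quotient := mkAH I1.ringCon
  let p2 : kQ k →ₐ[k] I2.ringCon.Quotient := mkAH I2.ringCon
  let pJ : FreeAlgebra k (Fin 7) →ₐ[k] kQ k := mkAH (J k).ringCon
  -- φ kills J, so descends to kQ
  have hphiJ : ∀ r ∈ rels k, phiF k r ∈ J k := by
    apply map_rels_mem k (phiF k) (by simp) (by simp) (by simp) (-1) (-1) <;> simp [sub_eq_add_neg]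
  have hpsiJ : ∀ r ∈ rels k, psiF k r ∈ J k := by
    apply map_rels_mem k (psiF k) (by simp) (by simp) (by simp) 1 1 <;> simp
  have keyJ : ∀ (g : FreeAlgebra k (Fin 7) →ₐ[k] FreeAlgebra k (Fin 7)),
      (∀ r ∈ rels k, g r ∈ J k) →
      ∀ {C : Type _} [Ring C] [Algebra k C] (q : kQ k →ₐ[k] C),
      J k ≤ TwoSidedIdeal.ker (q.comp (pJ.comp g)) := by
    intro g hg C _ _ q
    apply span_le'
    intro r hr
    rw [SetLike.mem_coe, TwoSidedIdeal.mem_ker]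
    show q (pJ (g r)) = 0
    have : pJ (g r) = 0 := mk'_eq_zero (hg r hr)
    rw [this, map_zero]
  -- descend φ, ψ to kQ
  let Φ0 : kQ k →ₐ[k] I2.ringCon.Quotient :=
    liftAH (J k) (p2.comp (pJ.comp (phiF k))) (keyJ (phiF k) hphiJ p2)
  let Ψ0 : kQ k →ₐ[k] I1.ringCon.Quotient :=
    liftAH (J k) (p1.comp (pJ.comp (psiF k))) (keyJ (psiF k) hpsiJ p1)
  have Φ0_mk : ∀ x, Φ0 ((J k).ringCon.mk' x) = p2 (pJ (phiF k x)) := fun _ => rfl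
  have Ψ0_mk : ∀ x, Ψ0 ((J k).ringCon.mk' x) = p1 (pJ (psiF k x)) := fun _ => rfl
  -- Φ0 kills I1
  have hΦ0 : I1 ≤ TwoSidedIdeal.ker Φ0 := by
    apply span_le'
    rintro r (rfl|rfl) <;>
      rw [SetLike.mem_coe, TwoSidedIdeal.mem_ker]
    · show Φ0 ((J k).ringCon.mk' (a1 k) * (J k).ringCon.mk' (b1 k)) = 0
      rw [← map_mul, Φ0_mk]
      have hm : pJ (phiF k (a1 k * b1 k)) ∈ I2 := by
        have : pJ (phiF k (a1 k * b1 k))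
            = (A1 k * B1 k - A2 k * B1 k - A1 k * B2 k) + (A2 k * B2 k) := by
          simp only [map_mul, phiF_a1, phiF_b1, map_sub]
          show ((J k).ringCon.mk' (a1 k) - (J k).ringCon.mk' (a2 k)) *
              ((J k).ringCon.mk' (b1 k) - (J k).ringCon.mk' (b2 k)) = _
          rw [← A1, ← A2, ← B1, ← B2]
          noncomm_ring
        rw [this]
        exact TwoSidedIdeal.add_mem _
          (TwoSidedIdeal.subset_span (Set.mem_insert _ _))
          (TwoSidedIdeal.subset_span (Set.mem_insert_of_mem _ (Set.mem_singleton _)))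
      exact mk'_eq_zero hm
    · show Φ0 ((J k).ringCon.mk' (a2 k) * (J k).ringCon.mk' (b2 k)) = 0
      rw [← map_mul, Φ0_mk]
      have hm : pJ (phiF k (a2 k * b2 k)) ∈ I2 := by
        have : pJ (phiF k (a2 k * b2 k)) = A2 k * B2 k := by
          simp only [map_mul, phiF_a2, phiF_b2]; rfl
        rw [this]
        exact TwoSidedIdeal.subset_span (Set.mem_insert_of_mem _ (Set.mem_singleton _))
      exact mk'_eq_zero hm
  -- Ψ0 kills I2
  have hΨ0 : I2 ≤ TwoSidedIdeal.ker Ψ0 := by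
    apply span_le'
    rintro r (rfl|rfl) <;>
      rw [SetLike.mem_coe, TwoSidedIdeal.mem_ker]
    · have expand : A1 k * B1 k - A2 k * B1 k - A1 k * B2 k
          = (J k).ringCon.mk' (a1 k * b1 k - a2 k * b1 k - a1 k * b2 k) := by
        simp only [map_sub, map_mul]; rfl
      rw [expand, Ψ0_mk]
      have hm : pJ (psiF k (a1 k * b1 k - a2 k * b1 k - a1 k * b2 k)) ∈ I1 := by
        have : pJ (psiF k (a1 k * b1 k - a2 k * b1 k - a1 k * b2 k))
            = A1 k * B1 k - A2 k * B2 k := by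
          simp only [map_sub, map_mul, psiF_a1, psiF_a2, psiF_b1, psiF_b2, map_add]
          show ((J k).ringCon.mk' (a1 k) + (J k).ringCon.mk' (a2 k)) *
              ((J k).ringCon.mk' (b1 k) + (J k).ringCon.mk' (b2 k))
              - (J k).ringCon.mk' (a2 k) *
                ((J k).ringCon.mk' (b1 k) + (J k).ringCon.mk' (b2 k))
              - ((J k).ringCon.mk' (a1 k) + (J k).ringCon.mk' (a2 k)) *
                (J k).ringCon.mk' (b2 k) = _
          rw [← A1, ← A2, ← B1, ← B2]
          noncomm_ring
        rw [this]
        exact TwoSidedIdeal.sub_mem _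
          (TwoSidedIdeal.subset_span (Set.mem_insert _ _))
          (TwoSidedIdeal.subset_span (Set.mem_insert_of_mem _ (Set.mem_singleton _)))
      exact mk'_eq_zero hm
    · show Ψ0 ((J k).ringCon.mk' (a2 k) * (J k).ringCon.mk' (b2 k)) = 0
      rw [← map_mul, Ψ0_mk]
      have hm : pJ (psiF k (a2 k * b2 k)) ∈ I1 := by
        have : pJ (psiF k (a2 k * b2 k)) = A2 k * B2 k := by
          simp only [map_mul, psiF_a2, psiF_b2]; rfl
        rw [this]
        exact TwoSidedIdeal.subset_span (Set.mem_insert_of_mem _ (Set.mem_singleton _))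
      exact mk'_eq_zero hm
  -- descend to the quotients
  let Φ : I1.ringCon.Quotient →ₐ[k] I2.ringCon.Quotient := liftAH I1 Φ0 hΦ0
  let Ψ : I2.ringCon.Quotient →ₐ[k] I1.ringCon.Quotient := liftAH I2 Ψ0 hΨ0
  refine ⟨AlgEquiv.ofAlgHom Φ Ψ ?_ ?_⟩
  · apply AlgHom.ext
    intro x
    induction x using Quotient.inductionOn' with
    | h q =>
      induction q using Quotient.inductionOn' with
      | h y =>
        show Φ (Ψ (I2.ringCon.mk' ((J k).ringCon.mk' y))) = I2.ringCon.mk' ((J k).ringCon.mk' y)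
        have step1 : Ψ (I2.ringCon.mk' ((J k).ringCon.mk' y))
            = I1.ringCon.mk' ((J k).ringCon.mk' (psiF k y)) := rfl
        have step2 : Φ (I1.ringCon.mk' ((J k).ringCon.mk' (psiF k y)))
            = I2.ringCon.mk' ((J k).ringCon.mk' (phiF k (psiF k y))) := rfl
        rw [step1, step2]
        have : phiF k (psiF k y) = y := AlgHom.congr_fun (phiF_comp_psiF k) y
        rw [this]
  · apply AlgHom.ext
    intro x
    induction x using Quotient.inductionOn' with
    | h q =>
      induction q using Quotient.inductionOn' with
      | h y =>
        show Ψ (Φ (I1.ringCon.mk' ((J k).ringCon.mk' y))) = I1.ringCon.mk' ((J k).ringCon.mk' y)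
        have step1 : Φ (I1.ringCon.mk' ((J k).ringCon.mk' y))
            = I2.ringCon.mk' ((J k).ringCon.mk' (phiF k y)) := rfl
        have step2 : Ψ (I2.ringCon.mk' ((J k).ringCon.mk' (phiF k y)))
            = I1.ringCon.mk' ((J k).ringCon.mk' (psiF k (phiF k y))) := rfl
        rw [step1, step2]
        have : psiF k (phiF k y) = y := AlgHom.congr_fun (psiF_comp_phiF k) y
        rw [this]
end
end

section
/- Let k be a field of characteristic different from 2. There exists a k-algebra automorphism φ of kQ with φ(α₁) = (1/2)(α₁ − α₂), φ(α₂) = (1/2)(α₁ + α₂), φ(β₁) = (1/2)(β₁ − β₂), φ(β₂) = β₁ + β₂, and φ(e_i) = e_i for i = 1, 2, 3; moreover φ maps the two-sided ideal ⟨α₁β₁, α₂β₂⟩ of kQ onto the two-sided ideal ⟨α₁β₁ + α₂β₂, α₂β₁ + α₁β₂⟩. -/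
/-!
Context: `F = FreeAlgebra k (Fin 7)` is the free `k`-algebra on seven generators
`e₁, e₂, e₃, α₁, α₂, β₁, β₂`.  `J` is the two-sided ideal generated by
`eᵢeⱼ (i ≠ j)`, `eᵢ² - eᵢ`, `e₁ + e₂ + e₃ - 1`, `αᵢ - e₁ αᵢ e₂`, `βᵢ - e₂ βᵢ e₃`,
and `kQ = F/J` is the path algebra of the quiver
`3 ⇉(β₁,β₂) 2 ⇉(α₁,α₂) 1`.
-/

noncomputable section

variable (k : Type*) [Field k]

section Aux

variable (k : Type*) [Field k]

/-- The endomorphism `φ₀` of `F` inducing the automorphism `φ` of `kQ`. -/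
def phi0 : FreeAlgebra k (Fin 7) →ₐ[k] FreeAlgebra k (Fin 7) :=
  FreeAlgebra.lift k ![e1 k, e2 k, e3 k,
    (2:k)⁻¹ • (a1 k - a2 k), (2:k)⁻¹ • (a1 k + a2 k),
    (2:k)⁻¹ • (b1 k - b2 k), b1 k + b2 k]

/-- The endomorphism `ψ₀` of `F` inducing the inverse automorphism. -/
def psi0 : FreeAlgebra k (Fin 7) →ₐ[k] FreeAlgebra k (Fin 7) :=
  FreeAlgebra.lift k ![e1 k, e2 k, e3 k,
    a1 k + a2 k, a2 k - a1 k,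
    b1 k + (2:k)⁻¹ • b2 k, (2:k)⁻¹ • b2 k - b1 k]

@[simp] lemma phi0_e1 : phi0 k (e1 k) = e1 k := by
  rw [e1, phi0, FreeAlgebra.lift_ι_apply]; rfl
@[simp] lemma phi0_e2 : phi0 k (e2 k) = e2 k := by
  rw [e2, phi0, FreeAlgebra.lift_ι_apply]; rfl
@[simp] lemma phi0_e3 : phi0 k (e3 k) = e3 k := by
  rw [e3, phi0, FreeAlgebra.lift_ι_apply]; rfl
@[simp] lemma phi0_a1 : phi0 k (a1 k) = (2:k)⁻¹ • (a1 k - a2 k) := by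
  rw [a1, phi0, FreeAlgebra.lift_ι_apply]; rfl
@[simp] lemma phi0_a2 : phi0 k (a2 k) = (2:k)⁻¹ • (a1 k + a2 k) := by
  rw [a2, phi0, FreeAlgebra.lift_ι_apply]; rfl
@[simp] lemma phi0_b1 : phi0 k (b1 k) = (2:k)⁻¹ • (b1 k - b2 k) := by
  rw [b1, phi0, FreeAlgebra.lift_ι_apply]; rfl
@[simp] lemma phi0_b2 : phi0 k (b2 k) = b1 k + b2 k := by
  rw [b2, phi0, FreeAlgebra.lift_ι_apply]; rfl
@[simp] lemma psi0_e1 : psi0 k (e1 k) = e1 k := by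
  rw [e1, psi0, FreeAlgebra.lift_ι_apply]; rfl
@[simp] lemma psi0_e2 : psi0 k (e2 k) = e2 k := by
  rw [e2, psi0, FreeAlgebra.lift_ι_apply]; rfl
@[simp] lemma psi0_e3 : psi0 k (e3 k) = e3 k := by
  rw [e3, psi0, FreeAlgebra.lift_ι_apply]; rfl
@[simp] lemma psi0_a1 : psi0 k (a1 k) = a1 k + a2 k := by
  rw [a1, psi0, FreeAlgebra.lift_ι_apply]; rfl
@[simp] lemma psi0_a2 : psi0 k (a2 k) = a2 k - a1 k := by
  rw [a2, psi0, FreeAlgebra.lift_ι_apply]; rfl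
@[simp] lemma psi0_b1 : psi0 k (b1 k) = b1 k + (2:k)⁻¹ • b2 k := by
  rw [b1, psi0, FreeAlgebra.lift_ι_apply]; rfl
@[simp] lemma psi0_b2 : psi0 k (b2 k) = (2:k)⁻¹ • b2 k - b1 k := by
  rw [b2, psi0, FreeAlgebra.lift_ι_apply]; rfl

lemma comp_phi_psi (hchar : (2:k) ≠ 0) : (phi0 k).comp (psi0 k) = AlgHom.id k _ := by
  apply FreeAlgebra.hom_ext
  funext i
  show phi0 k (psi0 k (FreeAlgebra.ι k i)) = FreeAlgebra.ι k i
  fin_cases i <;>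
    first
    | (show phi0 k (psi0 k (e1 k)) = e1 k; simp)
    | (show phi0 k (psi0 k (e2 k)) = e2 k; simp)
    | (show phi0 k (psi0 k (e3 k)) = e3 k; simp)
    | (show phi0 k (psi0 k (a1 k)) = a1 k; simp;
        match_scalars <;> first | ring1 | (field_simp; try norm_num))
    | (show phi0 k (psi0 k (a2 k)) = a2 k; simp;
        match_scalars <;> first | ring1 | (field_simp; try norm_num))
    | (show phi0 k (psi0 k (b1 k)) = b1 k; simp;
        match_scalars <;> first | ring1 | (field_simp; try norm_num))
    | (show phi0 k (psi0 k (b2 k)) = b2 k; simp;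
        match_scalars <;> first | ring1 | (field_simp; try norm_num))

lemma comp_psi_phi (hchar : (2:k) ≠ 0) : (psi0 k).comp (phi0 k) = AlgHom.id k _ := by
  apply FreeAlgebra.hom_ext
  funext i
  show psi0 k (phi0 k (FreeAlgebra.ι k i)) = FreeAlgebra.ι k i
  fin_cases i <;>
    first
    | (show psi0 k (phi0 k (e1 k)) = e1 k; simp)
    | (show psi0 k (phi0 k (e2 k)) = e2 k; simp)
    | (show psi0 k (phi0 k (e3 k)) = e3 k; simp)
    | (show psi0 k (phi0 k (a1 k)) = a1 k; simp;
        match_scalars <;> first | ring1 | (field_simp; try norm_num))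
    | (show psi0 k (phi0 k (a2 k)) = a2 k; simp;
        match_scalars <;> first | ring1 | (field_simp; try norm_num))
    | (show psi0 k (phi0 k (b1 k)) = b1 k; simp;
        match_scalars <;> first | ring1 | (field_simp; try norm_num))
    | (show psi0 k (phi0 k (b2 k)) = b2 k; simp;
        match_scalars <;> first | ring1 | (field_simp; try norm_num))

lemma smul_mem_J (c : k) {x : FreeAlgebra k (Fin 7)} (hx : x ∈ J k) : c • x ∈ J k := by
  rw [Algebra.smul_def]; exact (J k).mul_mem_left _ _ hx

lemma mem_J_of_mem_rels {x : FreeAlgebra k (Fin 7)} (h : x ∈ rels k) : x ∈ J k :=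
  TwoSidedIdeal.subset_span h

lemma rmem1 : e1 k * e2 k ∈ rels k := by rw [rels]; exact Set.mem_insert _ _
lemma rmem2 : e2 k * e1 k ∈ rels k := by rw [rels]; exact Set.mem_insert_of_mem _ (Set.mem_insert _ _)
lemma rmem3 : e1 k * e3 k ∈ rels k := by rw [rels]; exact Set.mem_insert_of_mem _ (Set.mem_insert_of_mem _ (Set.mem_insert _ _))
lemma rmem4 : e3 k * e1 k ∈ rels k := by rw [rels]; exact Set.mem_insert_of_mem _ (Set.mem_insert_of_mem _ (Set.mem_insert_of_mem _ (Set.mem_insert _ _)))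
lemma rmem5 : e2 k * e3 k ∈ rels k := by rw [rels]; exact Set.mem_insert_of_mem _ (Set.mem_insert_of_mem _ (Set.mem_insert_of_mem _ (Set.mem_insert_of_mem _ (Set.mem_insert _ _))))
lemma rmem6 : e3 k * e2 k ∈ rels k := by rw [rels]; exact Set.mem_insert_of_mem _ (Set.mem_insert_of_mem _ (Set.mem_insert_of_mem _ (Set.mem_insert_of_mem _ (Set.mem_insert_of_mem _ (Set.mem_insert _ _)))))
lemma rmem7 : e1 k * e1 k - e1 k ∈ rels k := by rw [rels]; exact Set.mem_insert_of_mem _ (Set.mem_insert_of_mem _ (Set.mem_insert_of_mem _ (Set.mem_insert_of_mem _ (Set.mem_insert_of_mem _ (Set.mem_insert_of_mem _ (Set.mem_insert _ _))))))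
lemma rmem8 : e2 k * e2 k - e2 k ∈ rels k := by rw [rels]; exact Set.mem_insert_of_mem _ (Set.mem_insert_of_mem _ (Set.mem_insert_of_mem _ (Set.mem_insert_of_mem _ (Set.mem_insert_of_mem _ (Set.mem_insert_of_mem _ (Set.mem_insert_of_mem _ (Set.mem_insert _ _)))))))
lemma rmem9 : e3 k * e3 k - e3 k ∈ rels k := by rw [rels]; exact Set.mem_insert_of_mem _ (Set.mem_insert_of_mem _ (Set.mem_insert_of_mem _ (Set.mem_insert_of_mem _ (Set.mem_insert_of_mem _ (Set.mem_insert_of_mem _ (Set.mem_insert_of_mem _ (Set.mem_insert_of_mem _ (Set.mem_insert _ _))))))))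
lemma rmem10 : e1 k + e2 k + e3 k - 1 ∈ rels k := by rw [rels]; exact Set.mem_insert_of_mem _ (Set.mem_insert_of_mem _ (Set.mem_insert_of_mem _ (Set.mem_insert_of_mem _ (Set.mem_insert_of_mem _ (Set.mem_insert_of_mem _ (Set.mem_insert_of_mem _ (Set.mem_insert_of_mem _ (Set.mem_insert_of_mem _ (Set.mem_insert _ _)))))))))
lemma rmem11 : a1 k - e1 k * a1 k * e2 k ∈ rels k := by rw [rels]; exact Set.mem_insert_of_mem _ (Set.mem_insert_of_mem _ (Set.mem_insert_of_mem _ (Set.mem_insert_of_mem _ (Set.mem_insert_of_mem _ (Set.mem_insert_of_mem _ (Set.mem_insert_of_mem _ (Set.mem_insert_of_mem _ (Set.mem_insert_of_mem _ (Set.mem_insert_of_mem _ (Set.mem_insert _ _))))))))))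
lemma rmem12 : a2 k - e1 k * a2 k * e2 k ∈ rels k := by rw [rels]; exact Set.mem_insert_of_mem _ (Set.mem_insert_of_mem _ (Set.mem_insert_of_mem _ (Set.mem_insert_of_mem _ (Set.mem_insert_of_mem _ (Set.mem_insert_of_mem _ (Set.mem_insert_of_mem _ (Set.mem_insert_of_mem _ (Set.mem_insert_of_mem _ (Set.mem_insert_of_mem _ (Set.mem_insert_of_mem _ (Set.mem_insert _ _)))))))))))
lemma rmem13 : b1 k - e2 k * b1 k * e3 k ∈ rels k := by rw [rels]; exact Set.mem_insert_of_mem _ (Set.mem_insert_of_mem _ (Set.mem_insert_of_mem _ (Set.mem_insert_of_mem _ (Set.mem_insert_of_mem _ (Set.mem_insert_of_mem _ (Set.mem_insert_of_mem _ (Set.mem_insert_of_mem _ (Set.mem_insert_of_mem _ (Set.mem_insert_of_mem _ (Set.mem_insert_of_mem _ (Set.mem_insert_of_mem _ (Set.mem_insert _ _))))))))))))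
lemma rmem14 : b2 k - e2 k * b2 k * e3 k ∈ rels k := by rw [rels]; exact Set.mem_insert_of_mem _ (Set.mem_insert_of_mem _ (Set.mem_insert_of_mem _ (Set.mem_insert_of_mem _ (Set.mem_insert_of_mem _ (Set.mem_insert_of_mem _ (Set.mem_insert_of_mem _ (Set.mem_insert_of_mem _ (Set.mem_insert_of_mem _ (Set.mem_insert_of_mem _ (Set.mem_insert_of_mem _ (Set.mem_insert_of_mem _ (Set.mem_insert_of_mem _ (rfl)))))))))))))

lemma maps_J_of_maps_rels (f : FreeAlgebra k (Fin 7) →ₐ[k] FreeAlgebra k (Fin 7))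
    (hf : ∀ r ∈ rels k, f r ∈ J k) : ∀ x ∈ J k, f x ∈ J k := by
  intro x hx
  have := TwoSidedIdeal.mem_span_iff.mp hx (TwoSidedIdeal.comap f (J k))
    (fun r hr => (TwoSidedIdeal.mem_comap f).mpr (hf r hr))
  exact (TwoSidedIdeal.mem_comap f).mp this

lemma phi0_rels : ∀ r ∈ rels k, phi0 k r ∈ J k := by
  intro r hr
  simp only [rels, Set.mem_insert_iff, Set.mem_singleton_iff] at hr
  rcases hr with rfl|rfl|rfl|rfl|rfl|rfl|rfl|rfl|rfl|rfl|rfl|rfl|rfl|rfl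
  · rw [map_mul, phi0_e1, phi0_e2]; exact mem_J_of_mem_rels k (rmem1 k)
  · rw [map_mul, phi0_e2, phi0_e1]; exact mem_J_of_mem_rels k (rmem2 k)
  · rw [map_mul, phi0_e1, phi0_e3]; exact mem_J_of_mem_rels k (rmem3 k)
  · rw [map_mul, phi0_e3, phi0_e1]; exact mem_J_of_mem_rels k (rmem4 k)
  · rw [map_mul, phi0_e2, phi0_e3]; exact mem_J_of_mem_rels k (rmem5 k)
  · rw [map_mul, phi0_e3, phi0_e2]; exact mem_J_of_mem_rels k (rmem6 k)
  · rw [map_sub, map_mul, phi0_e1]; exact mem_J_of_mem_rels k (rmem7 k)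
  · rw [map_sub, map_mul, phi0_e2]; exact mem_J_of_mem_rels k (rmem8 k)
  · rw [map_sub, map_mul, phi0_e3]; exact mem_J_of_mem_rels k (rmem9 k)
  · rw [map_sub, map_add, map_add, map_one, phi0_e1, phi0_e2, phi0_e3]
    exact mem_J_of_mem_rels k (rmem10 k)
  · have h : phi0 k (a1 k - e1 k * a1 k * e2 k) =
        (2:k)⁻¹ • ((a1 k - e1 k * a1 k * e2 k) - (a2 k - e1 k * a2 k * e2 k)) := by
      simp only [map_sub, map_mul, phi0_a1, phi0_e1, phi0_e2, smul_sub,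
        mul_smul_comm, smul_mul_assoc, mul_sub, sub_mul]
      module
    rw [h]
    exact smul_mem_J k _ ((J k).sub_mem (mem_J_of_mem_rels k (rmem11 k))
      (mem_J_of_mem_rels k (rmem12 k)))
  · have h : phi0 k (a2 k - e1 k * a2 k * e2 k) =
        (2:k)⁻¹ • ((a1 k - e1 k * a1 k * e2 k) + (a2 k - e1 k * a2 k * e2 k)) := by
      simp only [map_sub, map_mul, phi0_a2, phi0_e1, phi0_e2, smul_add, smul_sub,
        mul_smul_comm, smul_mul_assoc, mul_add, add_mul, mul_sub, sub_mul]
      module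
    rw [h]
    exact smul_mem_J k _ ((J k).add_mem (mem_J_of_mem_rels k (rmem11 k))
      (mem_J_of_mem_rels k (rmem12 k)))
  · have h : phi0 k (b1 k - e2 k * b1 k * e3 k) =
        (2:k)⁻¹ • ((b1 k - e2 k * b1 k * e3 k) - (b2 k - e2 k * b2 k * e3 k)) := by
      simp only [map_sub, map_mul, phi0_b1, phi0_e2, phi0_e3, smul_sub,
        mul_smul_comm, smul_mul_assoc, mul_sub, sub_mul]
      module
    rw [h]
    exact smul_mem_J k _ ((J k).sub_mem (mem_J_of_mem_rels k (rmem13 k))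
      (mem_J_of_mem_rels k (rmem14 k)))
  · have h : phi0 k (b2 k - e2 k * b2 k * e3 k) =
        (b1 k - e2 k * b1 k * e3 k) + (b2 k - e2 k * b2 k * e3 k) := by
      simp only [map_sub, map_mul, phi0_b2, phi0_e2, phi0_e3, mul_add, add_mul]
      abel
    rw [h]
    exact (J k).add_mem (mem_J_of_mem_rels k (rmem13 k))
      (mem_J_of_mem_rels k (rmem14 k))

lemma psi0_rels : ∀ r ∈ rels k, psi0 k r ∈ J k := by
  intro r hr
  simp only [rels, Set.mem_insert_iff, Set.mem_singleton_iff] at hr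
  rcases hr with rfl|rfl|rfl|rfl|rfl|rfl|rfl|rfl|rfl|rfl|rfl|rfl|rfl|rfl
  · rw [map_mul, psi0_e1, psi0_e2]; exact mem_J_of_mem_rels k (rmem1 k)
  · rw [map_mul, psi0_e2, psi0_e1]; exact mem_J_of_mem_rels k (rmem2 k)
  · rw [map_mul, psi0_e1, psi0_e3]; exact mem_J_of_mem_rels k (rmem3 k)
  · rw [map_mul, psi0_e3, psi0_e1]; exact mem_J_of_mem_rels k (rmem4 k)
  · rw [map_mul, psi0_e2, psi0_e3]; exact mem_J_of_mem_rels k (rmem5 k)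
  · rw [map_mul, psi0_e3, psi0_e2]; exact mem_J_of_mem_rels k (rmem6 k)
  · rw [map_sub, map_mul, psi0_e1]; exact mem_J_of_mem_rels k (rmem7 k)
  · rw [map_sub, map_mul, psi0_e2]; exact mem_J_of_mem_rels k (rmem8 k)
  · rw [map_sub, map_mul, psi0_e3]; exact mem_J_of_mem_rels k (rmem9 k)
  · rw [map_sub, map_add, map_add, map_one, psi0_e1, psi0_e2, psi0_e3]
    exact mem_J_of_mem_rels k (rmem10 k)
  · have h : psi0 k (a1 k - e1 k * a1 k * e2 k) =
        (a1 k - e1 k * a1 k * e2 k) + (a2 k - e1 k * a2 k * e2 k) := by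
      simp only [map_sub, map_mul, psi0_a1, psi0_e1, psi0_e2, mul_add, add_mul]
      abel
    rw [h]
    exact (J k).add_mem (mem_J_of_mem_rels k (rmem11 k))
      (mem_J_of_mem_rels k (rmem12 k))
  · have h : psi0 k (a2 k - e1 k * a2 k * e2 k) =
        (a2 k - e1 k * a2 k * e2 k) - (a1 k - e1 k * a1 k * e2 k) := by
      simp only [map_sub, map_mul, psi0_a2, psi0_e1, psi0_e2, mul_sub, sub_mul]
      abel
    rw [h]
    exact (J k).sub_mem (mem_J_of_mem_rels k (rmem12 k))
      (mem_J_of_mem_rels k (rmem11 k))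
  · have h : psi0 k (b1 k - e2 k * b1 k * e3 k) =
        (b1 k - e2 k * b1 k * e3 k) + (2:k)⁻¹ • (b2 k - e2 k * b2 k * e3 k) := by
      simp only [map_sub, map_mul, psi0_b1, psi0_e2, psi0_e3, smul_sub,
        mul_smul_comm, smul_mul_assoc, mul_add, add_mul]
      module
    rw [h]
    exact (J k).add_mem (mem_J_of_mem_rels k (rmem13 k))
      (smul_mem_J k _ (mem_J_of_mem_rels k (rmem14 k)))
  · have h : psi0 k (b2 k - e2 k * b2 k * e3 k) =
        (2:k)⁻¹ • (b2 k - e2 k * b2 k * e3 k) - (b1 k - e2 k * b1 k * e3 k) := by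
      simp only [map_sub, map_mul, psi0_b2, psi0_e2, psi0_e3, smul_sub,
        mul_smul_comm, smul_mul_assoc, mul_sub, sub_mul]
      module
    rw [h]
    exact (J k).sub_mem (smul_mem_J k _ (mem_J_of_mem_rels k (rmem14 k)))
      (mem_J_of_mem_rels k (rmem13 k))

/-- The induced algebra homomorphism on the quotient `kQ`. -/
def indHom (f : FreeAlgebra k (Fin 7) →ₐ[k] FreeAlgebra k (Fin 7))
    (hf : ∀ x ∈ J k, f x ∈ J k) : kQ k →ₐ[k] kQ k where
  toFun := fun x => Quotient.liftOn' x
    (fun a => ((f a : FreeAlgebra k (Fin 7)) : kQ k)) (fun a b hab => by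
      have h : (J k).ringCon a b := hab
      rw [(J k).rel_iff] at h
      rw [RingCon.eq, (J k).rel_iff, ← map_sub]
      exact hf _ h)
  map_one' := by show ((f 1 : FreeAlgebra k (Fin 7)) : kQ k) = 1; rw [map_one]; rfl
  map_mul' x y := Quotient.inductionOn₂' x y fun a b => by
    show ((f (a * b) : FreeAlgebra k (Fin 7)) : kQ k) = (f a : FreeAlgebra k (Fin 7)) * f b
    rw [map_mul]; rfl
  map_zero' := by show ((f 0 : FreeAlgebra k (Fin 7)) : kQ k) = 0; rw [map_zero]; rfl
  map_add' x y := Quotient.inductionOn₂' x y fun a b => by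
    show ((f (a + b) : FreeAlgebra k (Fin 7)) : kQ k) = (f a : FreeAlgebra k (Fin 7)) + f b
    rw [map_add]; rfl
  commutes' r := by
    show ((f (algebraMap k _ r) : FreeAlgebra k (Fin 7)) : kQ k) = algebraMap k (kQ k) r
    rw [f.commutes]; rfl

lemma indHom_mk (f : FreeAlgebra k (Fin 7) →ₐ[k] FreeAlgebra k (Fin 7))
    (hf : ∀ x ∈ J k, f x ∈ J k) (a : FreeAlgebra k (Fin 7)) :
    indHom k f hf ((J k).ringCon.mk' a) = (J k).ringCon.mk' (f a) := rfl

/-- The automorphism `φ` of `kQ`. -/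
def Phi (hchar : (2:k) ≠ 0) : kQ k ≃ₐ[k] kQ k :=
  AlgEquiv.ofAlgHom (indHom k (phi0 k) (maps_J_of_maps_rels k _ (phi0_rels k)))
    (indHom k (psi0 k) (maps_J_of_maps_rels k _ (psi0_rels k)))
    (by
      apply AlgHom.ext
      intro x
      induction x using Quotient.inductionOn' with
      | h a =>
        show (J k).ringCon.mk' (phi0 k (psi0 k a)) = (J k).ringCon.mk' a
        have := AlgHom.congr_fun (comp_phi_psi k hchar) a
        simp only [AlgHom.coe_comp, Function.comp_apply, AlgHom.id_apply] at this
        rw [this])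
    (by
      apply AlgHom.ext
      intro x
      induction x using Quotient.inductionOn' with
      | h a =>
        show (J k).ringCon.mk' (psi0 k (phi0 k a)) = (J k).ringCon.mk' a
        have := AlgHom.congr_fun (comp_psi_phi k hchar) a
        simp only [AlgHom.coe_comp, Function.comp_apply, AlgHom.id_apply] at this
        rw [this])

variable (hchar : (2:k) ≠ 0)

lemma Phi_mk (a : FreeAlgebra k (Fin 7)) :
    Phi k hchar ((J k).ringCon.mk' a) = (J k).ringCon.mk' (phi0 k a) := rfl

lemma Phi_symm_mk (a : FreeAlgebra k (Fin 7)) :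
    (Phi k hchar).symm ((J k).ringCon.mk' a) = (J k).ringCon.mk' (psi0 k a) := rfl

lemma Phi_A1 : Phi k hchar (A1 k) = (2:k)⁻¹ • (A1 k - A2 k) := by
  rw [A1, Phi_mk, phi0_a1]; rfl
lemma Phi_A2 : Phi k hchar (A2 k) = (2:k)⁻¹ • (A1 k + A2 k) := by
  rw [A2, Phi_mk, phi0_a2]; rfl
lemma Phi_B1 : Phi k hchar (B1 k) = (2:k)⁻¹ • (B1 k - B2 k) := by
  rw [B1, Phi_mk, phi0_b1]; rfl
lemma Phi_B2 : Phi k hchar (B2 k) = B1 k + B2 k := by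
  rw [B2, Phi_mk, phi0_b2]; rfl
lemma Phi_E1 : Phi k hchar (E1 k) = E1 k := by rw [E1, Phi_mk, phi0_e1]
lemma Phi_E2 : Phi k hchar (E2 k) = E2 k := by rw [E2, Phi_mk, phi0_e2]
lemma Phi_E3 : Phi k hchar (E3 k) = E3 k := by rw [E3, Phi_mk, phi0_e3]
lemma Phi_symm_A1 : (Phi k hchar).symm (A1 k) = A1 k + A2 k := by
  rw [A1, Phi_symm_mk, psi0_a1]; rfl
lemma Phi_symm_A2 : (Phi k hchar).symm (A2 k) = A2 k - A1 k := by
  rw [A2, Phi_symm_mk, psi0_a2]; rfl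
lemma Phi_symm_B1 : (Phi k hchar).symm (B1 k) = B1 k + (2:k)⁻¹ • B2 k := by
  rw [B1, Phi_symm_mk, psi0_b1]; rfl
lemma Phi_symm_B2 : (Phi k hchar).symm (B2 k) = (2:k)⁻¹ • B2 k - B1 k := by
  rw [B2, Phi_symm_mk, psi0_b2]; rfl

lemma smul_mem_kQ (I : TwoSidedIdeal (kQ k)) (c : k) {x : kQ k} (hx : x ∈ I) : c • x ∈ I := by
  rw [Algebra.smul_def]; exact I.mul_mem_left _ _ hx

end Aux

/-- If `char k ≠ 2`, there is a `k`-algebra automorphism `φ` of `kQ` with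
`φ(α₁) = ½(α₁ - α₂)`, `φ(α₂) = ½(α₁ + α₂)`, `φ(β₁) = ½(β₁ - β₂)`, `φ(β₂) = β₁ + β₂`,
`φ(eᵢ) = eᵢ`, mapping `⟨α₁β₁, α₂β₂⟩` onto `⟨α₁β₁ + α₂β₂, α₂β₁ + α₁β₂⟩`. -/
theorem exists_automorphism_mapping_I_to_I4 (hchar : (2 : k) ≠ 0) :
    ∃ φ : kQ k ≃ₐ[k] kQ k,
      φ (A1 k) = (2 : k)⁻¹ • (A1 k - A2 k) ∧
      φ (A2 k) = (2 : k)⁻¹ • (A1 k + A2 k) ∧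
      φ (B1 k) = (2 : k)⁻¹ • (B1 k - B2 k) ∧
      φ (B2 k) = B1 k + B2 k ∧
      φ (E1 k) = E1 k ∧ φ (E2 k) = E2 k ∧ φ (E3 k) = E3 k ∧
      φ '' (TwoSidedIdeal.span {A1 k * B1 k, A2 k * B2 k} : Set (kQ k)) =
        (TwoSidedIdeal.span {A1 k * B1 k + A2 k * B2 k, A2 k * B1 k + A1 k * B2 k} :
          Set (kQ k)) := by
  refine ⟨Phi k hchar, Phi_A1 k hchar, Phi_A2 k hchar, Phi_B1 k hchar, Phi_B2 k hchar,
    Phi_E1 k hchar, Phi_E2 k hchar, Phi_E3 k hchar, ?_⟩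
  set φ := Phi k hchar with hφ
  set S : TwoSidedIdeal (kQ k) := TwoSidedIdeal.span {A1 k * B1 k, A2 k * B2 k} with hS
  set T : TwoSidedIdeal (kQ k) :=
    TwoSidedIdeal.span {A1 k * B1 k + A2 k * B2 k, A2 k * B1 k + A1 k * B2 k} with hT
  have hG1 : φ (A1 k * B1 k) = ((2:k)⁻¹ * (2:k)⁻¹) •
      ((A1 k * B1 k + A2 k * B2 k) - (A2 k * B1 k + A1 k * B2 k)) := by
    rw [map_mul, Phi_A1 k hchar, Phi_B1 k hchar, smul_mul_assoc, mul_smul_comm, smul_smul]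
    congr 1
    noncomm_ring
  have hG2 : φ (A2 k * B2 k) = (2:k)⁻¹ •
      ((A1 k * B1 k + A2 k * B2 k) + (A2 k * B1 k + A1 k * B2 k)) := by
    rw [map_mul, Phi_A2 k hchar, Phi_B2 k hchar, smul_mul_assoc]
    congr 1
    noncomm_ring
  have hS1 : φ.symm (A1 k * B1 k + A2 k * B2 k) = (2:k) • (A1 k * B1 k) + A2 k * B2 k := by
    rw [map_add, map_mul, map_mul, Phi_symm_A1 k hchar, Phi_symm_A2 k hchar,
      Phi_symm_B1 k hchar, Phi_symm_B2 k hchar]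
    simp only [mul_add, add_mul, mul_sub, sub_mul, mul_smul_comm, smul_mul_assoc,
      smul_add, smul_sub]
    match_scalars <;> first | ring1 | (field_simp; try norm_num)
  have hS2 : φ.symm (A2 k * B1 k + A1 k * B2 k) = A2 k * B2 k - (2:k) • (A1 k * B1 k) := by
    rw [map_add, map_mul, map_mul, Phi_symm_A1 k hchar, Phi_symm_A2 k hchar,
      Phi_symm_B1 k hchar, Phi_symm_B2 k hchar]
    simp only [mul_add, add_mul, mul_sub, sub_mul, mul_smul_comm, smul_mul_assoc,
      smul_add, smul_sub]
    match_scalars <;> first | ring1 | (field_simp; try norm_num)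
  have hsub1 : ∀ x ∈ S, φ x ∈ T := by
    intro x hx
    refine (TwoSidedIdeal.mem_comap φ).mp (TwoSidedIdeal.mem_span_iff.mp hx
      (TwoSidedIdeal.comap φ T) ?_)
    rintro z hz
    simp only [Set.mem_insert_iff, Set.mem_singleton_iff] at hz
    rcases hz with rfl | rfl
    · rw [SetLike.mem_coe, TwoSidedIdeal.mem_comap, hG1]
      exact smul_mem_kQ k T _ (T.sub_mem (TwoSidedIdeal.subset_span (Set.mem_insert _ _))
        (TwoSidedIdeal.subset_span (Set.mem_insert_of_mem _ rfl)))
    · rw [SetLike.mem_coe, TwoSidedIdeal.mem_comap, hG2]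
      exact smul_mem_kQ k T _ (T.add_mem (TwoSidedIdeal.subset_span (Set.mem_insert _ _))
        (TwoSidedIdeal.subset_span (Set.mem_insert_of_mem _ rfl)))
  have hsub2 : ∀ x ∈ T, φ.symm x ∈ S := by
    intro x hx
    refine (TwoSidedIdeal.mem_comap φ.symm).mp (TwoSidedIdeal.mem_span_iff.mp hx
      (TwoSidedIdeal.comap φ.symm S) ?_)
    rintro z hz
    simp only [Set.mem_insert_iff, Set.mem_singleton_iff] at hz
    rcases hz with rfl | rfl
    · rw [SetLike.mem_coe, TwoSidedIdeal.mem_comap, hS1]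
      exact S.add_mem (smul_mem_kQ k S _ (TwoSidedIdeal.subset_span (Set.mem_insert _ _)))
        (TwoSidedIdeal.subset_span (Set.mem_insert_of_mem _ rfl))
    · rw [SetLike.mem_coe, TwoSidedIdeal.mem_comap, hS2]
      exact S.sub_mem (TwoSidedIdeal.subset_span (Set.mem_insert_of_mem _ rfl))
        (smul_mem_kQ k S _ (TwoSidedIdeal.subset_span (Set.mem_insert _ _)))
  apply Set.Subset.antisymm
  · rintro y ⟨x, hx, rfl⟩
    exact hsub1 x hx
  · intro z hz
    exact ⟨φ.symm z, hsub2 z hz, φ.apply_symm_apply z⟩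
end
end

section
/- Let k be a field of characteristic different from 2, and let G = FreeAlgebra k (Fin 4) be the free (noncommutative, associative, unital) k-algebra on four generators x₁, x₂, y₁, y₂. Then the quotient of G by the two-sided ideal generated by {x₁y₁, x₂y₂} is isomorphic, as a k-algebra, to the quotient of G by the two-sided ideal generated by {x₁y₁ + x₂y₂, x₂y₁ + x₁y₂}; an isomorphism is induced by the algebra automorphism of G sending x₁ ↦ (1/2)(x₁ − x₂), x₂ ↦ (1/2)(x₁ + x₂), y₁ ↦ (1/2)(y₁ − y₂), y₂ ↦ y₁ + y₂. -/
/-!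
`G = FreeAlgebra k (Fin 4)` is the free `k`-algebra on four generators
`x₁, x₂, y₁, y₂`.
-/

noncomputable section

variable (k : Type*) [Field k]

/-- The generators `x₁, x₂, y₁, y₂` of `G = FreeAlgebra k (Fin 4)`. -/
def x1 : FreeAlgebra k (Fin 4) := FreeAlgebra.ι k 0
def x2 : FreeAlgebra k (Fin 4) := FreeAlgebra.ι k 1
def y1 : FreeAlgebra k (Fin 4) := FreeAlgebra.ι k 2
def y2 : FreeAlgebra k (Fin 4) := FreeAlgebra.ι k 3

/-- If `char k ≠ 2`, then `G/⟨x₁y₁, x₂y₂⟩ ≅ G/⟨x₁y₁ + x₂y₂, x₂y₁ + x₁y₂⟩` as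
`k`-algebras, and an isomorphism is induced by the automorphism of `G` sending
`x₁ ↦ ½(x₁ - x₂)`, `x₂ ↦ ½(x₁ + x₂)`, `y₁ ↦ ½(y₁ - y₂)`, `y₂ ↦ y₁ + y₂`. -/
theorem free_quotient_iso (hchar : (2 : k) ≠ 0) :
    ∃ φ : FreeAlgebra k (Fin 4) ≃ₐ[k] FreeAlgebra k (Fin 4),
      φ (x1 k) = (2 : k)⁻¹ • (x1 k - x2 k) ∧
      φ (x2 k) = (2 : k)⁻¹ • (x1 k + x2 k) ∧
      φ (y1 k) = (2 : k)⁻¹ • (y1 k - y2 k) ∧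
      φ (y2 k) = y1 k + y2 k ∧
      ∃ ψ : (TwoSidedIdeal.span {x1 k * y1 k, x2 k * y2 k} :
              TwoSidedIdeal (FreeAlgebra k (Fin 4))).ringCon.Quotient ≃ₐ[k]
            (TwoSidedIdeal.span
                {x1 k * y1 k + x2 k * y2 k, x2 k * y1 k + x1 k * y2 k} :
              TwoSidedIdeal (FreeAlgebra k (Fin 4))).ringCon.Quotient,
        ∀ g : FreeAlgebra k (Fin 4),
          ψ ((TwoSidedIdeal.span {x1 k * y1 k, x2 k * y2 k} :
                TwoSidedIdeal (FreeAlgebra k (Fin 4))).ringCon.mk' g) =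
            (TwoSidedIdeal.span
                {x1 k * y1 k + x2 k * y2 k, x2 k * y1 k + x1 k * y2 k} :
              TwoSidedIdeal (FreeAlgebra k (Fin 4))).ringCon.mk' (φ g) := by
  classical
  set G := FreeAlgebra k (Fin 4) with hG
  let f : G →ₐ[k] G := FreeAlgebra.lift k
    ![(2 : k)⁻¹ • (x1 k - x2 k), (2 : k)⁻¹ • (x1 k + x2 k),
      (2 : k)⁻¹ • (y1 k - y2 k), y1 k + y2 k]
  let g : G →ₐ[k] G := FreeAlgebra.lift k
    ![x1 k + x2 k, x2 k - x1 k,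
      y1 k + (2 : k)⁻¹ • y2 k, (2 : k)⁻¹ • y2 k - y1 k]
  have hfx1 : f (x1 k) = (2 : k)⁻¹ • (x1 k - x2 k) := by
    show (FreeAlgebra.lift k _) (FreeAlgebra.ι k 0) = _
    rw [FreeAlgebra.lift_ι_apply]; simp
  have hfx2 : f (x2 k) = (2 : k)⁻¹ • (x1 k + x2 k) := by
    show (FreeAlgebra.lift k _) (FreeAlgebra.ι k 1) = _
    rw [FreeAlgebra.lift_ι_apply]; simp
  have hfy1 : f (y1 k) = (2 : k)⁻¹ • (y1 k - y2 k) := by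
    show (FreeAlgebra.lift k _) (FreeAlgebra.ι k 2) = _
    rw [FreeAlgebra.lift_ι_apply]; simp
  have hfy2 : f (y2 k) = y1 k + y2 k := by
    show (FreeAlgebra.lift k _) (FreeAlgebra.ι k 3) = _
    rw [FreeAlgebra.lift_ι_apply]; simp
  have hgx1 : g (x1 k) = x1 k + x2 k := by
    show (FreeAlgebra.lift k _) (FreeAlgebra.ι k 0) = _
    rw [FreeAlgebra.lift_ι_apply]; simp
  have hgx2 : g (x2 k) = x2 k - x1 k := by
    show (FreeAlgebra.lift k _) (FreeAlgebra.ι k 1) = _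
    rw [FreeAlgebra.lift_ι_apply]; simp
  have hgy1 : g (y1 k) = y1 k + (2 : k)⁻¹ • y2 k := by
    show (FreeAlgebra.lift k _) (FreeAlgebra.ι k 2) = _
    rw [FreeAlgebra.lift_ι_apply]; simp
  have hgy2 : g (y2 k) = (2 : k)⁻¹ • y2 k - y1 k := by
    show (FreeAlgebra.lift k _) (FreeAlgebra.ι k 3) = _
    rw [FreeAlgebra.lift_ι_apply]; simp
  have hfg : f.comp g = AlgHom.id k G := by
    apply FreeAlgebra.hom_ext
    funext i
    fin_cases i <;>
      simp only [AlgHom.coe_comp, Function.comp_apply, AlgHom.coe_id, id_eq, Fin.isValue]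
    · show f (g (x1 k)) = x1 k
      rw [hgx1, map_add, hfx1, hfx2]
      match_scalars <;> (field_simp; try norm_num)
    · show f (g (x2 k)) = x2 k
      rw [hgx2, map_sub, hfx1, hfx2]
      match_scalars <;> (field_simp; try norm_num)
    · show f (g (y1 k)) = y1 k
      rw [hgy1, map_add, map_smul, hfy1, hfy2]
      match_scalars <;> (field_simp; try norm_num)
    · show f (g (y2 k)) = y2 k
      rw [hgy2, map_sub, map_smul, hfy1, hfy2]
      match_scalars <;> (field_simp; try norm_num)
  have hgf : g.comp f = AlgHom.id k G := by
    apply FreeAlgebra.hom_ext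
    funext i
    fin_cases i <;>
      simp only [AlgHom.coe_comp, Function.comp_apply, AlgHom.coe_id, id_eq, Fin.isValue]
    · show g (f (x1 k)) = x1 k
      rw [hfx1, map_smul, map_sub, hgx1, hgx2]
      match_scalars <;> (field_simp; try norm_num)
    · show g (f (x2 k)) = x2 k
      rw [hfx2, map_smul, map_add, hgx1, hgx2]
      match_scalars <;> (field_simp; try norm_num)
    · show g (f (y1 k)) = y1 k
      rw [hfy1, map_smul, map_sub, hgy1, hgy2]
      match_scalars <;> (field_simp; try norm_num)
    · show g (f (y2 k)) = y2 k
      rw [hfy2, map_add, hgy1, hgy2]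
      match_scalars <;> (field_simp; try norm_num)
  set I1 : TwoSidedIdeal G := TwoSidedIdeal.span {x1 k * y1 k, x2 k * y2 k} with hI1
  set I2 : TwoSidedIdeal G :=
    TwoSidedIdeal.span {x1 k * y1 k + x2 k * y2 k, x2 k * y1 k + x1 k * y2 k} with hI2
  have smem : ∀ (I : TwoSidedIdeal G) (c : k) (x : G), x ∈ I → c • x ∈ I := by
    intro I c x hx
    rw [Algebra.smul_def]
    exact I.mul_mem_left _ _ hx
  have mem1 : x1 k * y1 k ∈ I1 := TwoSidedIdeal.subset_span (by left; rfl)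
  have mem2 : x2 k * y2 k ∈ I1 := TwoSidedIdeal.subset_span (by right; rfl)
  have ha : x1 k * y1 k + x2 k * y2 k ∈ I2 := TwoSidedIdeal.subset_span (by left; rfl)
  have hb : x2 k * y1 k + x1 k * y2 k ∈ I2 := TwoSidedIdeal.subset_span (by right; rfl)
  -- forward: f maps I1 into I2
  have hf1 : f (x1 k * y1 k) ∈ I2 := by
    have key : f (x1 k * y1 k) =
        ((2 : k)⁻¹ * (2 : k)⁻¹) •
          ((x1 k * y1 k + x2 k * y2 k) - (x2 k * y1 k + x1 k * y2 k)) := by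
      rw [map_mul, hfx1, hfy1, smul_mul_smul_comm]
      congr 1
      simp only [sub_mul, mul_sub]; abel
    rw [key]
    exact smem _ _ _ (I2.sub_mem ha hb)
  have hf2 : f (x2 k * y2 k) ∈ I2 := by
    have key : f (x2 k * y2 k) =
        (2 : k)⁻¹ •
          ((x1 k * y1 k + x2 k * y2 k) + (x2 k * y1 k + x1 k * y2 k)) := by
      rw [map_mul, hfx2, hfy2, smul_mul_assoc]
      congr 1
      simp only [sub_eq_add_neg, mul_add, add_mul, neg_mul, mul_neg, neg_neg]; abel
    rw [key]
    exact smem _ _ _ (I2.add_mem ha hb)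
  have hfwd : ∀ z ∈ I1, f z ∈ I2 := by
    intro z hz
    have : I1 ≤ I2.comap f := by
      intro w hw
      rw [TwoSidedIdeal.mem_span_iff] at hw
      exact hw (I2.comap f) (by
        rintro u (rfl | rfl) <;> rw [SetLike.mem_coe, TwoSidedIdeal.mem_comap]
        · exact hf1
        · exact hf2)
    exact (TwoSidedIdeal.mem_comap _).mp (this hz)
  -- backward: g maps I2 into I1
  have hg1 : g (x1 k * y1 k + x2 k * y2 k) ∈ I1 := by
    have key : g (x1 k * y1 k + x2 k * y2 k) =
        (x1 k * y1 k + x1 k * y1 k) + ((2 : k)⁻¹ + (2 : k)⁻¹) • (x2 k * y2 k) := by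
      rw [map_add, map_mul, map_mul, hgx1, hgy1, hgx2, hgy2]
      simp only [mul_add, add_mul, mul_sub, sub_mul, mul_smul_comm, smul_mul_assoc,
        smul_add, smul_sub, smul_smul]
      match_scalars <;> ring
    have h2 : ((2 : k)⁻¹ + (2 : k)⁻¹) = 1 := by field_simp; ring
    rw [key, h2, one_smul]
    exact I1.add_mem (I1.add_mem mem1 mem1) mem2
  have hg2 : g (x2 k * y1 k + x1 k * y2 k) ∈ I1 := by
    have key : g (x2 k * y1 k + x1 k * y2 k) =
        (-(x1 k * y1 k) + -(x1 k * y1 k)) + ((2 : k)⁻¹ + (2 : k)⁻¹) • (x2 k * y2 k) := by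
      rw [map_add, map_mul, map_mul, hgx2, hgy1, hgx1, hgy2]
      simp only [mul_add, add_mul, mul_sub, sub_mul, mul_smul_comm, smul_mul_assoc,
        smul_add, smul_sub, smul_smul]
      match_scalars <;> ring
    have h2 : ((2 : k)⁻¹ + (2 : k)⁻¹) = 1 := by field_simp; ring
    rw [key, h2, one_smul]
    exact I1.add_mem (I1.add_mem (I1.neg_mem mem1) (I1.neg_mem mem1)) mem2
  have hbwd : ∀ z ∈ I2, g z ∈ I1 := by
    intro z hz
    have : I2 ≤ I1.comap g := by
      intro w hw
      rw [TwoSidedIdeal.mem_span_iff] at hw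
      exact hw (I1.comap g) (by
        rintro u (rfl | rfl) <;> rw [SetLike.mem_coe, TwoSidedIdeal.mem_comap]
        · exact hg1
        · exact hg2)
    exact (TwoSidedIdeal.mem_comap _).mp (this hz)
  -- the automorphism
  let φ : G ≃ₐ[k] G := AlgEquiv.ofAlgHom f g hfg hgf
  -- descend to an equivalence of quotients
  have key12 : ∀ a b : G, I1.ringCon a b → I2.ringCon (f a) (f b) := by
    intro a b h
    rw [TwoSidedIdeal.rel_iff] at h ⊢
    rw [← map_sub]
    exact hfwd _ h
  have key21 : ∀ a b : G, I2.ringCon a b → I1.ringCon (g a) (g b) := by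
    intro a b h
    rw [TwoSidedIdeal.rel_iff] at h ⊢
    rw [← map_sub]
    exact hbwd _ h
  let ψ : I1.ringCon.Quotient ≃ₐ[k] I2.ringCon.Quotient :=
    { toFun := Quotient.lift (fun a : G => ((f a : G) : I2.ringCon.Quotient))
        (fun a b h => (RingCon.eq _).mpr (key12 a b h))
      invFun := Quotient.lift (fun a : G => ((g a : G) : I1.ringCon.Quotient))
        (fun a b h => (RingCon.eq _).mpr (key21 a b h))
      left_inv := by
        refine Quotient.ind fun a => ?_
        show ((g (f a) : G) : I1.ringCon.Quotient) = (a : I1.ringCon.Quotient)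
        exact congrArg _ (AlgHom.congr_fun hgf a)
      right_inv := by
        refine Quotient.ind fun a => ?_
        show ((f (g a) : G) : I2.ringCon.Quotient) = (a : I2.ringCon.Quotient)
        exact congrArg _ (AlgHom.congr_fun hfg a)
      map_mul' := by
        refine Quotient.ind₂ fun a b => ?_
        show ((f (a * b) : G) : I2.ringCon.Quotient) = ((f a : G) : _) * ((f b : G) : _)
        rw [map_mul]
        rfl
      map_add' := by
        refine Quotient.ind₂ fun a b => ?_
        show ((f (a + b) : G) : I2.ringCon.Quotient) = ((f a : G) : _) + ((f b : G) : _)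
        rw [map_add]
        rfl
      commutes' := by
        intro r
        show ((f (algebraMap k G r) : G) : I2.ringCon.Quotient) = _
        rw [f.commutes]
        rfl }
  refine ⟨φ, hfx1, hfx2, hfy1, hfy2, ψ, fun a => rfl⟩
end
end
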